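/- Let E be a real normed vector space and N a smooth (1,1) tensor field on E such that [N,N]_FN(X,Y) = 0 for all vector fields X, Y. Then [N^k, N^l]_FN(X,Y) = 0 for all positive integers k, l and all vector fields X, Y, where N^k denotes the pointwise k-th power x ↦ N(x)^k. -/

import Mathlib

variable {E : Type*} [NormedAddCommGroup E] [NormedSpace ℝ E]

/-- Lie bracket of vector fields on `E`: `[X,Y](x) = DY(x)(X(x)) − DX(x)(Y(x))`. -/
noncomputable def lie (X Y : E → E) : E → E :=
  fun x => fderiv ℝ Y x (X x) - fderiv ℝ X x (Y x)

/-- Pointwise action of a (1,1) tensor field on a vector field. -/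
def app (N : E → E →L[ℝ] E) (X : E → E) : E → E := fun x => N x (X x)

/-- Pointwise `k`-th power of a (1,1) tensor field. -/
def pw (N : E → E →L[ℝ] E) (k : ℕ) : E → E →L[ℝ] E := fun x => (N x) ^ k

/-- Frölicher–Nijenhuis bracket of two (1,1) tensor fields, evaluated on vector fields. -/
noncomputable def fnBracket (N₁ N₂ : E → E →L[ℝ] E) (X Y : E → E) : E → E :=
  fun x =>
    N₁ x (N₂ x (lie X Y x)) + N₂ x (N₁ x (lie X Y x))
      + lie (app N₁ X) (app N₂ Y) x + lie (app N₂ X) (app N₁ Y) x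
      - N₁ x (lie (app N₂ X) Y x + lie X (app N₂ Y) x)
      - N₂ x (lie (app N₁ X) Y x + lie X (app N₁ Y) x)

/-- Nijenhuis torsion of a (1,1) tensor field, evaluated on vector fields. -/
noncomputable def tor (N : E → E →L[ℝ] E) (X Y : E → E) : E → E :=
  fun x =>
    lie (app N X) (app N Y) x
      + N x (N x (lie X Y x) - lie (app N X) Y x - lie X (app N Y) x)

/-- Haantjes tensor of a (1,1) tensor field, evaluated on vector fields. -/
noncomputable def haan (M : E → E →L[ℝ] E) (X Y : E → E) : E → E :=
  fun x =>
    M x (M x (tor M X Y x)) + tor M (app M X) (app M Y) x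
      - M x (tor M (app M X) Y x + tor M X (app M Y) x)

/-- The bracket `[A,B]_X = [AX,BX] − A[X,BX] + B[X,AX]` of two (1,1) tensor fields
with respect to a vector field `X`. -/
noncomputable def brX (A B : E → E →L[ℝ] E) (X : E → E) : E → E :=
  fun x =>
    lie (app A X) (app B X) x - A x (lie X (app B X) x) + B x (lie X (app A X) x)

/-- A 1-form is closed iff its Fréchet derivative is symmetric. -/
def IsClosedOneForm (ρ : E → E →L[ℝ] ℝ) : Prop :=
  ∀ x u v, fderiv ℝ ρ x u v = fderiv ℝ ρ x v u

section Aux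

variable {N : E → E →L[ℝ] E} {X Y : E → E}

lemma appFN_contDiff (hN : ContDiff ℝ (⊤ : ℕ∞) N) (hX : ContDiff ℝ (⊤ : ℕ∞) X) :
    ContDiff ℝ (⊤ : ℕ∞) (app N X) :=
  hN.clm_apply hX

lemma pwFN_succ (N : E → E →L[ℝ] E) (k : ℕ) (X : E → E) :
    app (pw N (k + 1)) X = app N (app (pw N k) X) := by
  funext y
  simp [app, pw, pow_succ', ContinuousLinearMap.mul_apply]

lemma pwFN_zero (N : E → E →L[ℝ] E) (X : E → E) : app (pw N 0) X = X := by
  funext y; simp [app, pw]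

lemma appFN_pw_contDiff (hN : ContDiff ℝ (⊤ : ℕ∞) N)
    (hX : ContDiff ℝ (⊤ : ℕ∞) X) (k : ℕ) : ContDiff ℝ (⊤ : ℕ∞) (app (pw N k) X) := by
  induction k with
  | zero => rw [pwFN_zero]; exact hX
  | succ k ih => rw [pwFN_succ]; exact hN.clm_apply ih

lemma fderiv_appFN (hN : ContDiff ℝ (⊤ : ℕ∞) N)
    (hX : ContDiff ℝ (⊤ : ℕ∞) X) (x w : E) :
    fderiv ℝ (app N X) x w = fderiv ℝ N x w (X x) + N x (fderiv ℝ X x w) := by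
  have : app N X = fun y => N y (X y) := rfl
  rw [this, fderiv_clm_apply (hN.differentiable (by simp) x)
    (hX.differentiable (by simp) x)]
  simp [ContinuousLinearMap.comp_apply, ContinuousLinearMap.flip_apply]
  abel

/-- Pointwise data: `muF N x m u v` is the derivative at `x` of `y ↦ (N y)^m v`
in direction `u` (for constant `v`). -/
noncomputable def muF (N : E → E →L[ℝ] E) (x : E) : ℕ → E → E → E
  | 0 => fun _ _ => 0
  | m + 1 => fun u v => fderiv ℝ N x u (((N x) ^ m) v) + N x (muF N x m u v)

lemma fderiv_appFN_pw (hN : ContDiff ℝ (⊤ : ℕ∞) N)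
    (hX : ContDiff ℝ (⊤ : ℕ∞) X) (m : ℕ) (x w : E) :
    fderiv ℝ (app (pw N m) X) x w = muF N x m w (X x) + ((N x) ^ m) (fderiv ℝ X x w) := by
  induction m with
  | zero =>
    rw [pwFN_zero]
    simp [muF, ContinuousLinearMap.one_apply]
  | succ m ih =>
    rw [pwFN_succ, fderiv_appFN hN (appFN_pw_contDiff hN hX m), ih]
    have hv : app (pw N m) X x = ((N x) ^ m) (X x) := rfl
    rw [hv]
    simp only [muF, map_add, pow_succ', ContinuousLinearMap.mul_apply]
    abel

/-- The pointwise Nijenhuis condition extracted from the hypothesis by evaluating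
on constant vector fields. -/
lemma starFN (hN : ContDiff ℝ (⊤ : ℕ∞) N)
    (h : ∀ X Y : E → E, ContDiff ℝ (⊤ : ℕ∞) X → ContDiff ℝ (⊤ : ℕ∞) Y →
      ∀ x, fnBracket N N X Y x = 0) (x a b : E) :
    fderiv ℝ N x (N x a) b - fderiv ℝ N x (N x b) a
      + N x (fderiv ℝ N x b a) - N x (fderiv ℝ N x a b) = 0 := by
  have h0 := h (fun _ => a) (fun _ => b) contDiff_const contDiff_const x
  simp only [fnBracket, lie] at h0
  have da : ∀ w, fderiv ℝ (app N fun _ => a) x w = fderiv ℝ N x w a := by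
    intro w; rw [fderiv_appFN hN contDiff_const]; simp
  have db : ∀ w, fderiv ℝ (app N fun _ => b) x w = fderiv ℝ N x w b := by
    intro w; rw [fderiv_appFN hN contDiff_const]; simp
  simp only [da, db] at h0
  simp only [fderiv_fun_const, Pi.zero_apply, ContinuousLinearMap.zero_apply, map_zero,
    add_zero, zero_sub, sub_zero, zero_add] at h0
  have hva : app N (fun _ => a) x = N x a := rfl
  have hvb : app N (fun _ => b) x = N x b := rfl
  rw [hva, hvb] at h0
  have key : (2 : ℝ) • (fderiv ℝ N x (N x a) b - fderiv ℝ N x (N x b) a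
      + N x (fderiv ℝ N x b a) - N x (fderiv ℝ N x a b)) = 0 := by
    rw [two_smul, ← h0]
    simp only [map_add, map_sub, map_neg]
    abel
  exact (smul_eq_zero.mp key).resolve_left two_ne_zero

lemma commFN (N : E → E →L[ℝ] E) (x : E) (l : ℕ) (z : E) :
    ((N x) ^ l) (N x z) = N x (((N x) ^ l) z) := by
  rw [← ContinuousLinearMap.mul_apply, ← ContinuousLinearMap.mul_apply, ← pow_succ, pow_succ']

lemma algFN_one (x : E)
    (hs : ∀ a b : E, fderiv ℝ N x (N x a) b - fderiv ℝ N x (N x b) a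
      + N x (fderiv ℝ N x b a) - N x (fderiv ℝ N x a b) = 0) (l : ℕ) (a b : E) :
    muF N x l (N x a) b - fderiv ℝ N x (((N x) ^ l) b) a
      + ((N x) ^ l) (fderiv ℝ N x b a) - N x (muF N x l a b) = 0 := by
  induction l with
  | zero => simp [muF]
  | succ l ih =>
    have h1 := hs a (((N x) ^ l) b)
    have h2 := congrArg (N x) ih
    simp only [map_sub, map_add, map_zero] at h2
    simp only [muF, pow_succ', ContinuousLinearMap.mul_apply, map_add, commFN]
    linear_combination (norm := abel1) h1 + h2

lemma algFN (x : E)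
    (hs : ∀ a b : E, fderiv ℝ N x (N x a) b - fderiv ℝ N x (N x b) a
      + N x (fderiv ℝ N x b a) - N x (fderiv ℝ N x a b) = 0) (k l : ℕ) (a b : E) :
    muF N x l (((N x) ^ k) a) b - muF N x k (((N x) ^ l) b) a
      + ((N x) ^ l) (muF N x k b a) - ((N x) ^ k) (muF N x l a b) = 0 := by
  induction k with
  | zero => simp [muF]
  | succ k ih =>
    have h1 := algFN_one x hs l (((N x) ^ k) a) b
    have h2 := congrArg (N x) ih
    simp only [map_sub, map_add, map_zero] at h2
    simp only [muF, pow_succ', ContinuousLinearMap.mul_apply, map_add, commFN]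
    linear_combination (norm := abel1) h1 + h2

end Aux
theorem stmt1 (N : E → E →L[ℝ] E) (hN : ContDiff ℝ (⊤ : ℕ∞) N)
    (h : ∀ X Y : E → E, ContDiff ℝ (⊤ : ℕ∞) X → ContDiff ℝ (⊤ : ℕ∞) Y →
      ∀ x, fnBracket N N X Y x = 0)
    (k l : ℕ) (hk : 0 < k) (hl : 0 < l)
    (X Y : E → E) (hX : ContDiff ℝ (⊤ : ℕ∞) X) (hY : ContDiff ℝ (⊤ : ℕ∞) Y) (x : E) :
    fnBracket (pw N k) (pw N l) X Y x = 0 := by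
  have hs := starFN hN h x
  have d1 := algFN (N := N) x hs k l (X x) (Y x)
  have d2 := algFN (N := N) x hs l k (X x) (Y x)
  have rX : ∀ (m : ℕ) (w : E), fderiv ℝ (app (pw N m) X) x w
      = muF N x m w (X x) + ((N x) ^ m) (fderiv ℝ X x w) :=
    fun m w => fderiv_appFN_pw hN hX m x w
  have rY : ∀ (m : ℕ) (w : E), fderiv ℝ (app (pw N m) Y) x w
      = muF N x m w (Y x) + ((N x) ^ m) (fderiv ℝ Y x w) :=
    fun m w => fderiv_appFN_pw hN hY m x w
  have vX : ∀ m : ℕ, app (pw N m) X x = ((N x) ^ m) (X x) := fun _ => rfl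
  have vY : ∀ m : ℕ, app (pw N m) Y x = ((N x) ^ m) (Y x) := fun _ => rfl
  simp only [fnBracket, lie, rX, rY, vX, vY, pw]
  simp only [map_add, map_sub]
  linear_combination (norm := abel1) d1 + d2
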